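/- Suppose {R_j}_{j∈ℤ} ⊆ L(K,H) satisfy the fundamental equations and the geometric bounds on U_{s,r}. Then P = R_{-1}A_1 ∈ L(H) is a projection (P² = P) with complementary projection I - P = R_0 A_0, and Q = A_1 R_{-1} ∈ L(K) is a projection with complementary projection I - Q = A_0 R_0. -/

import Mathlib

open Filter Topology

/-- `P = R₋₁A₁` and `I - P = R₀A₀` are complementary projections on `H`, and
`Q = A₁R₋₁` and `I - Q = A₀R₀` are complementary projections on `K`. -/
theorem complementary_projections
    {H K : Type*} [NormedAddCommGroup H] [NormedSpace ℂ H] [CompleteSpace H]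
    [NormedAddCommGroup K] [NormedSpace ℂ K] [CompleteSpace K]
    (s r : ℝ) (hs : 0 ≤ s) (hsr : s < r)
    (A₀ A₁ : H →L[ℂ] K) (R : ℤ → (K →L[ℂ] H))
    (hgb : ∀ δ ε : ℝ, 0 < δ → 0 < ε → s + ε < r - δ →
      ∃ c d : ℝ, 0 < c ∧ 0 < d ∧
        ∀ j : ℕ, ‖R (j : ℤ)‖ ≤ c / (r - δ) ^ j ∧ ‖R (-(j : ℤ))‖ ≤ d * (s + ε) ^ j)
    (hleft : ∀ j : ℤ, (R (j - 1)).comp A₁ + (R j).comp A₀ =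
      if j = 0 then (1 : H →L[ℂ] H) else 0)
    (hright : ∀ j : ℤ, A₁.comp (R (j - 1)) + A₀.comp (R j) =
      if j = 0 then (1 : K →L[ℂ] K) else 0) :
    IsIdempotentElem ((R (-1)).comp A₁) ∧
    1 - (R (-1)).comp A₁ = (R 0).comp A₀ ∧
    IsIdempotentElem (A₁.comp (R (-1))) ∧
    1 - A₁.comp (R (-1)) = A₀.comp (R 0) := by
  set ε := (r - s) / 3 with hε
  have hε0 : 0 < ε := by rw [hε]; linarith
  obtain ⟨c, d, hc, hd, hb⟩ := hgb ε ε hε0 hε0 (by rw [hε]; linarith)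
  have hq0 : 0 < s + ε := by linarith
  have hq1 : s + ε < r - ε := by rw [hε]; linarith
  have hrδ : 0 < r - ε := lt_trans hq0 hq1
  -- nonzero-index versions of the fundamental equations
  have hleft' : ∀ j : ℤ, j ≠ 0 → (R (j - 1)).comp A₁ = -((R j).comp A₀) := by
    intro j hj
    have := hleft j
    rw [if_neg hj] at this
    exact eq_neg_of_add_eq_zero_left this
  have hright' : ∀ j : ℤ, j ≠ 0 → A₁.comp (R (j - 1)) = -(A₀.comp (R j)) := by
    intro j hj
    have := hright j
    rw [if_neg hj] at this
    exact eq_neg_of_add_eq_zero_left this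
  -- the key vanishing lemmas
  have decay : ∀ (T : K →L[ℂ] H),
      (∀ k : ℕ, ‖T‖ ≤ (d * (s + ε) * ‖A₀‖ * c) * ((s + ε) / (r - ε)) ^ k) → T = 0 := by
    intro T hT
    have hq : (s + ε) / (r - ε) < 1 := (div_lt_one hrδ).mpr hq1
    have hq' : 0 ≤ (s + ε) / (r - ε) := by positivity
    have htend : Tendsto (fun k : ℕ =>
        (d * (s + ε) * ‖A₀‖ * c) * ((s + ε) / (r - ε)) ^ k) atTop (𝓝 0) := by
      have := (tendsto_pow_atTop_nhds_zero_of_lt_one hq' hq).const_mul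
        (d * (s + ε) * ‖A₀‖ * c)
      simpa using this
    have : ‖T‖ ≤ 0 := ge_of_tendsto' htend hT
    exact norm_le_zero_iff.mp this
  have key1 : (R (-1)).comp (A₀.comp (R 0)) = 0 := by
    have const : ∀ k : ℕ,
        (R (-(1 + (k : ℤ)))).comp (A₀.comp (R (k : ℤ))) =
          (R (-1)).comp (A₀.comp (R 0)) := by
      intro k
      induction k with
      | zero => norm_num
      | succ k ih =>
        rw [← ih]
        have h1 : A₀.comp (R ((k : ℤ) + 1)) = -(A₁.comp (R (k : ℤ))) := by
          have := hright' ((k : ℤ) + 1) (by omega)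
          simp only [add_sub_cancel_right] at this
          rw [this, neg_neg]
        have h2 : (R (-(1 + (k : ℤ)) - 1)).comp A₁ = -((R (-(1 + (k : ℤ)))).comp A₀) :=
          hleft' (-(1 + (k : ℤ))) (by omega)
        have e : (-(1 + ((k : ℤ) + 1))) = -(1 + (k : ℤ)) - 1 := by ring
        push_cast
        rw [e, h1]
        ext x
        have h2x := DFunLike.congr_fun h2 (R (k : ℤ) x)
        simp only [ContinuousLinearMap.comp_apply, ContinuousLinearMap.neg_apply] at h2x ⊢
        rw [map_neg, h2x, neg_neg]
    apply decay
    intro k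
    rw [← const k]
    have hbk := hb k
    have hbk1 := hb (k + 1)
    have hnb : ‖R (-(1 + (k : ℤ)))‖ ≤ d * (s + ε) ^ (k + 1) := by
      have : (-(1 + (k : ℤ))) = -(((k + 1 : ℕ) : ℤ)) := by push_cast; ring
      rw [this]
      exact hbk1.2
    calc ‖(R (-(1 + (k : ℤ)))).comp (A₀.comp (R (k : ℤ)))‖
        ≤ ‖R (-(1 + (k : ℤ)))‖ * ‖A₀.comp (R (k : ℤ))‖ := ContinuousLinearMap.opNorm_comp_le _ _
      _ ≤ ‖R (-(1 + (k : ℤ)))‖ * (‖A₀‖ * ‖R (k : ℤ)‖) := by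
          apply mul_le_mul_of_nonneg_left (ContinuousLinearMap.opNorm_comp_le _ _)
            (norm_nonneg _)
      _ ≤ (d * (s + ε) ^ (k + 1)) * (‖A₀‖ * (c / (r - ε) ^ k)) := by
          apply mul_le_mul hnb _ (by positivity) (by positivity)
          exact mul_le_mul_of_nonneg_left hbk.1 (norm_nonneg _)
      _ = (d * (s + ε) * ‖A₀‖ * c) * ((s + ε) / (r - ε)) ^ k := by
          rw [pow_succ, div_pow]
          field_simp
  have key2 : (R 0).comp (A₀.comp (R (-1))) = 0 := by
    have const : ∀ k : ℕ,
        (R (k : ℤ)).comp (A₀.comp (R (-(1 + (k : ℤ))))) =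
          (R 0).comp (A₀.comp (R (-1))) := by
      intro k
      induction k with
      | zero => norm_num
      | succ k ih =>
        rw [← ih]
        have h1 : A₁.comp (R (-(1 + (k : ℤ)) - 1)) = -(A₀.comp (R (-(1 + (k : ℤ))))) :=
          hright' (-(1 + (k : ℤ))) (by omega)
        have h2 : (R (k : ℤ)).comp A₁ = -((R ((k : ℤ) + 1)).comp A₀) := by
          have := hleft' ((k : ℤ) + 1) (by omega)
          simpa using this
        have e : (-(1 + ((k : ℤ) + 1))) = -(1 + (k : ℤ)) - 1 := by ring
        push_cast
        rw [e]
        ext x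
        have t1 := DFunLike.congr_fun h1 x
        have t2 := DFunLike.congr_fun h2 (R (-(1 + (k : ℤ)) - 1) x)
        simp only [ContinuousLinearMap.comp_apply, ContinuousLinearMap.neg_apply] at t1 t2 ⊢
        rw [t1, map_neg] at t2
        exact (neg_injective t2).symm
    apply decay
    intro k
    rw [← const k]
    have hbk := hb k
    have hbk1 := hb (k + 1)
    have hnb : ‖R (-(1 + (k : ℤ)))‖ ≤ d * (s + ε) ^ (k + 1) := by
      have : (-(1 + (k : ℤ))) = -(((k + 1 : ℕ) : ℤ)) := by push_cast; ring
      rw [this]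
      exact hbk1.2
    calc ‖(R (k : ℤ)).comp (A₀.comp (R (-(1 + (k : ℤ)))))‖
        ≤ ‖R (k : ℤ)‖ * ‖A₀.comp (R (-(1 + (k : ℤ))))‖ := ContinuousLinearMap.opNorm_comp_le _ _
      _ ≤ ‖R (k : ℤ)‖ * (‖A₀‖ * ‖R (-(1 + (k : ℤ)))‖) := by
          apply mul_le_mul_of_nonneg_left (ContinuousLinearMap.opNorm_comp_le _ _)
            (norm_nonneg _)
      _ ≤ (c / (r - ε) ^ k) * (‖A₀‖ * (d * (s + ε) ^ (k + 1))) := by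
          apply mul_le_mul hbk.1 _ (by positivity) (by positivity)
          exact mul_le_mul_of_nonneg_left hnb (norm_nonneg _)
      _ = (d * (s + ε) * ‖A₀‖ * c) * ((s + ε) / (r - ε)) ^ k := by
          rw [pow_succ, div_pow]
          field_simp
  -- fundamental equations at j = 0
  have h0l : (R (-1)).comp A₁ + (R 0).comp A₀ = 1 := by
    have := hleft 0
    norm_num at this
    exact this
  have h0r : A₁.comp (R (-1)) + A₀.comp (R 0) = 1 := by
    have := hright 0
    norm_num at this
    exact this
  refine ⟨?_, ?_, ?_, ?_⟩
  · -- P² = P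
    show ((R (-1)).comp A₁) * ((R (-1)).comp A₁) = (R (-1)).comp A₁
    ext x
    have hA : A₁ (R (-1) (A₁ x)) = A₁ x - A₀ (R 0 (A₁ x)) := by
      have := DFunLike.congr_fun h0r (A₁ x)
      simp only [ContinuousLinearMap.add_apply, ContinuousLinearMap.comp_apply,
        ContinuousLinearMap.one_apply] at this
      linear_combination (norm := module) this
    have hk := DFunLike.congr_fun key1 (A₁ x)
    simp only [ContinuousLinearMap.comp_apply, ContinuousLinearMap.zero_apply] at hk
    simp only [ContinuousLinearMap.mul_apply, ContinuousLinearMap.comp_apply]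
    rw [hA, map_sub, hk, sub_zero]
  · -- 1 - P = R₀A₀
    rw [← h0l]; abel
  · -- Q² = Q
    show (A₁.comp (R (-1))) * (A₁.comp (R (-1))) = A₁.comp (R (-1))
    ext x
    have hA : R (-1) (A₁ (R (-1) x)) = R (-1) x - R 0 (A₀ (R (-1) x)) := by
      have := DFunLike.congr_fun h0l (R (-1) x)
      simp only [ContinuousLinearMap.add_apply, ContinuousLinearMap.comp_apply,
        ContinuousLinearMap.one_apply] at this
      linear_combination (norm := module) this
    have hk := DFunLike.congr_fun key2 x
    simp only [ContinuousLinearMap.comp_apply, ContinuousLinearMap.zero_apply] at hk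
    simp only [ContinuousLinearMap.mul_apply, ContinuousLinearMap.comp_apply]
    rw [hA, hk, sub_zero]
  · -- 1 - Q = A₀R₀
    rw [← h0r]; abel
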